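/- arXiv:math-ph/0303051 — 3 statements merged into one kernel-verified Lean document; each statement's English description precedes it below -/
import Mathlib

section
/- Let A be a Banach Lie algebra, H with adjoint {H}, and Γ a pseudo-inverse ({H}²Γ = {H}), with N := {H}Γ and R := Id - N. For W ∈ A with {ΓW} bounded, define F(W) := e^{-{ΓW}}(RW) + ψ({ΓW})(NW), where ψ(X) := Σ_{n≥0} (-X)^n/(n+1)!. Then H + F(W) = e^{-{ΓW}}(H + RW). -/
open NormedSpace

/-- Proposition 1: H + F(W) = e^{-{ΓW}} (H + RW), where
F(W) = e^{-{ΓW}} (RW) + ψ({ΓW}) (NW), ψ(X) = Σ (-X)^n/(n+1)!. -/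
theorem stmt_4 (A : Type*) [NormedAddCommGroup A] [NormedSpace ℝ A] [CompleteSpace A]
    (br : A →L[ℝ] A →L[ℝ] A)
    (anti : ∀ V W : A, br V W = - br W V)
    (jacobi : ∀ V W : A, br (br V W) = br V * br W - br W * br V)
    (H : A) (Γ : A →L[ℝ] A)
    (hΓ : br H * br H * Γ = br H)
    (N R : A →L[ℝ] A) (hN : N = br H * Γ) (hR : R = 1 - N)
    (ψ : (A →L[ℝ] A) → (A →L[ℝ] A))
    (hψ : ∀ X : A →L[ℝ] A, ψ X = ∑' n : ℕ, (((n + 1).factorial : ℝ)⁻¹) • (-X) ^ n)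
    (F : A → A)
    (hF : ∀ W : A, F W = exp (-(br (Γ W))) (R W) + ψ (br (Γ W)) (N W))
    (W : A) :
    H + F W = exp (-(br (Γ W))) (H + R W) := by
  set X : A →L[ℝ] A := br (Γ W) with hX
  set Y : A →L[ℝ] A := -X with hY
  have hsum : Summable (fun n : ℕ => ((n.factorial : ℝ)⁻¹) • Y ^ n) :=
    expSeries_summable' (𝕂 := ℝ) Y
  -- exp Y = 1 + ψ X * Y
  have hexp : exp Y = 1 + ψ X * Y := by
    have h1 : exp Y = ∑' n : ℕ, ((n.factorial : ℝ)⁻¹) • Y ^ n := by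
      rw [exp_eq_tsum (𝕂 := ℝ)]
    have h2 : ∑' n : ℕ, ((n.factorial : ℝ)⁻¹) • Y ^ n
        = ((Nat.factorial 0 : ℝ)⁻¹) • Y ^ 0
          + ∑' n : ℕ, (((n + 1).factorial : ℝ)⁻¹) • Y ^ (n + 1) :=
      hsum.tsum_eq_zero_add
    have hsum' : Summable (fun n : ℕ => (((n + 1).factorial : ℝ)⁻¹) • Y ^ n) := by
      refine Summable.of_norm_bounded (norm_expSeries_summable' (𝕂 := ℝ) Y) (fun n => ?_)
      have hle : ‖(((n + 1).factorial : ℝ))⁻¹‖ ≤ ‖((n.factorial : ℝ))⁻¹‖ := by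
        rw [Real.norm_eq_abs, Real.norm_eq_abs, abs_of_nonneg (by positivity),
          abs_of_nonneg (by positivity)]
        apply inv_anti₀
        · exact_mod_cast Nat.factorial_pos n
        · exact_mod_cast Nat.factorial_le (Nat.le_succ n)
      rw [norm_smul ((n.factorial : ℝ)⁻¹) (Y ^ n)]
      exact (_root_.norm_smul_le _ _).trans (mul_le_mul_of_nonneg_right hle (norm_nonneg (Y ^ n)))
    have h3 : ψ X * Y = ∑' n : ℕ, (((n + 1).factorial : ℝ)⁻¹) • Y ^ (n + 1) := by
      rw [hψ X]
      rw [show (∑' n : ℕ, (((n + 1).factorial : ℝ)⁻¹) • (-X) ^ n) * Y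
          = ∑' n : ℕ, ((((n + 1).factorial : ℝ)⁻¹) • Y ^ n) * Y from
        (hsum'.tsum_mul_right Y).symm]
      congr 1
    rw [h1, h2, h3]
    simp
  have hYH : Y H = N W := by
    have hXH : X H = -(br H (Γ W)) := by
      rw [hX, anti (Γ W) H]
    rw [hY, hN]
    simp [hXH]
  have hexpH : exp Y H = H + ψ X (N W) := by
    rw [hexp]
    simp [ContinuousLinearMap.add_apply, ContinuousLinearMap.mul_apply, hYH]
  rw [hF W, map_add, hexpH]
  abel
end

section
/- Let L be a Banach algebra and ∂ a bounded derivation of L (∂(ab) = (∂a)b + a(∂b)). Then for every V ∈ L: ∂(e^V) = ∫₀¹ e^{tV} · (∂V) · e^{(1-t)V} dt. -/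
open NormedSpace

/-- For a bounded derivation ∂ of a Banach algebra:
∂(e^V) = ∫₀¹ e^{tV} (∂V) e^{(1-t)V} dt. -/
theorem stmt_9 (L : Type*) [NormedRing L] [NormedAlgebra ℝ L] [CompleteSpace L]
    (D : L →L[ℝ] L) (leibniz : ∀ a b : L, D (a * b) = D a * b + a * D b)
    (V : L) :
    D (exp V) = ∫ t in (0:ℝ)..1, exp (t • V) * D V * exp ((1 - t) • V) := by
  have hD1 : D (1 : L) = 0 := by
    have := leibniz 1 1
    simpa using this
  -- h t = exp(tV) * D(exp((1-t)V))
  set h : ℝ → L := fun t => exp (t • V) * D (exp ((1 - t) • V)) with hh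
  have hderiv : ∀ t : ℝ,
      HasDerivAt h (-(exp (t • V) * D V * exp ((1 - t) • V))) t := by
    intro t
    have h1 : HasDerivAt (fun u : ℝ => exp (u • V)) (exp (t • V) * V) t :=
      hasDerivAt_exp_smul_const V t
    have hinner : HasDerivAt (fun u : ℝ => (1 : ℝ) - u) (-1) t := by
      simpa using (hasDerivAt_id' t).const_sub (1:ℝ)
    have h2 : HasDerivAt (fun u : ℝ => exp ((1 - u) • V))
        ((-1 : ℝ) • (V * exp ((1 - t) • V))) t :=
      (hasDerivAt_exp_smul_const' V (1 - t)).scomp t hinner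
    have h3 : HasDerivAt (fun u : ℝ => D (exp ((1 - u) • V)))
        (D ((-1 : ℝ) • (V * exp ((1 - t) • V)))) t :=
      D.hasFDerivAt.comp_hasDerivAt t h2
    have h4 := (h1.mul h3)
    refine h4.congr_deriv ?_
    simp only [map_smul, neg_one_smul, map_neg, leibniz V (exp ((1 - t) • V))]
    ring_nf
    noncomm_ring
  have hcont : Continuous fun t : ℝ => -(exp (t • V) * D V * exp ((1 - t) • V)) := by
    have he : Continuous (exp : L → L) := by
      letI : NormedAlgebra ℚ L := NormedAlgebra.restrictScalars ℚ ℝ L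
      exact exp_continuous
    continuity
  have hint := intervalIntegral.integral_eq_sub_of_hasDerivAt
    (f := h) (f' := fun t => -(exp (t • V) * D V * exp ((1 - t) • V)))
    (fun t _ => hderiv t) (hcont.intervalIntegrable 0 1)
  have h0 : h 0 = D (exp V) := by simp [hh]
  have h1 : h 1 = 0 := by simp [hh, hD1]
  rw [intervalIntegral.integral_neg] at hint
  rw [h0, h1] at hint
  rw [zero_sub] at hint
  exact (neg_injective hint).symm
end

section
/- Let L be a Banach algebra, ∂ a bounded derivation, and V ∈ L. Then ∂(e^V) = (ψ̃({V})(∂V)) · e^V, where {V} is the commutator operator ad_V and ψ̃(X) := (e^X - 1)/X = Σ_{n≥0} X^n/(n+1)!. -/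
set_option maxHeartbeats 1000000
set_option synthInstance.maxHeartbeats 1000000

open NormedSpace MeasureTheory

section aux
variable (L : Type*) [NormedRing L] [NormedAlgebra ℝ L]

noncomputable instance instRatNormedAlgebra : NormedAlgebra ℚ L := .restrictScalars ℚ ℝ L

instance instTowerCLM : IsScalarTower ℝ (L →L[ℝ] L) (L →L[ℝ] L) :=
  ⟨fun c f g => by ext w; simp [ContinuousLinearMap.mul_apply]⟩

instance instCommCLM : SMulCommClass ℝ (L →L[ℝ] L) (L →L[ℝ] L) :=
  ⟨fun c f g => by ext w; simp [ContinuousLinearMap.mul_apply]⟩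

/-- Left multiplication as a ring homomorphism into continuous linear maps. -/
noncomputable def lmulRH : L →+* (L →L[ℝ] L) where
  toFun := ContinuousLinearMap.mul ℝ L
  map_one' := by ext w; simp
  map_mul' x y := by ext w; simp [mul_assoc]
  map_zero' := by ext w; simp
  map_add' x y := by ext w; simp [add_mul]

/-- Right multiplication as a ring homomorphism from the opposite algebra. -/
noncomputable def rmulRH : Lᵐᵒᵖ →+* (L →L[ℝ] L) where
  toFun x := (ContinuousLinearMap.mul ℝ L).flip x.unop
  map_one' := by ext w; simp
  map_mul' x y := by ext w; simp [mul_assoc]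
  map_zero' := by ext w; simp
  map_add' x y := by ext w; simp [mul_add]

variable {L} [CompleteSpace L]

/-- Exponential of `ad x` acts by conjugation with `exp x`. -/
theorem exp_ad_apply (x W : L) :
    exp (ContinuousLinearMap.mul ℝ L x - (ContinuousLinearMap.mul ℝ L).flip x) W
      = exp x * W * exp (-x) := by
  set Lx := ContinuousLinearMap.mul ℝ L x with hLx
  set Rx := (ContinuousLinearMap.mul ℝ L).flip x with hRx
  have hcomm : Commute Lx (-Rx) := by
    apply Commute.neg_right
    ext w
    simp [hLx, hRx, ContinuousLinearMap.mul_apply, mul_assoc]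
  have hlc : Continuous (lmulRH L) := (ContinuousLinearMap.mul ℝ L).continuous
  have hrc : Continuous (rmulRH L) :=
    (ContinuousLinearMap.mul ℝ L).flip.continuous.comp MulOpposite.continuous_unop
  have h1 : exp Lx = ContinuousLinearMap.mul ℝ L (exp x) :=
    (map_exp (lmulRH L) hlc x).symm
  have h2 : exp (-Rx) = (ContinuousLinearMap.mul ℝ L).flip (exp (-x)) := by
    have hneg : -Rx = rmulRH L (MulOpposite.op (-x)) := by
      ext w; simp [hRx, rmulRH]
    rw [hneg, ← map_exp (rmulRH L) hrc, exp_op]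
    simp [rmulRH]
  rw [sub_eq_add_neg, exp_add_of_commute hcomm, h1, h2]
  simp [ContinuousLinearMap.mul_apply, mul_assoc]

theorem exp_smul_apply_eq_tsum (A : L →L[ℝ] L) (W : L) (s : ℝ) :
    exp (s • A) W = ∑' n : ℕ, (s ^ n * ((n.factorial : ℝ))⁻¹) • (A ^ n) W := by
  have h := (ContinuousLinearMap.apply ℝ L W).map_tsum
    (expSeries_summable' (𝕂 := ℝ) (x := s • A))
  rw [exp_eq_tsum ℝ]
  refine h.trans (tsum_congr fun n => ?_)
  rw [smul_pow]
  simp [smul_smul, mul_comm]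

theorem integral_exp_smul_apply (A : L →L[ℝ] L) (W : L) :
    ∫ s in (0:ℝ)..1, exp (s • A) W
      = ∑' n : ℕ, ((((n+1).factorial : ℝ))⁻¹) • (A ^ n) W := by
  set F : ℕ → ℝ → L := fun n s => (s ^ n * ((n.factorial : ℝ))⁻¹) • (A ^ n) W with hF
  have hFc : ∀ n, Continuous (F n) := fun n =>
    ((continuous_pow n).mul continuous_const).smul continuous_const
  have hF_int : ∀ n, Integrable (F n) (volume.restrict (Set.Ioc (0:ℝ) 1)) := fun n =>
    (hFc n).integrableOn_Ioc
  have hmaj : Summable fun n : ℕ => ((n.factorial : ℝ))⁻¹ * ‖(A ^ n) W‖ := by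
    refine Summable.of_nonneg_of_le (fun n => by positivity)
      (fun n => ?_) ((norm_expSeries_summable' (𝕂 := ℝ) A).mul_right ‖W‖)
    have : ((n.factorial : ℝ))⁻¹ * ‖(A ^ n) W‖ = ‖(((n.factorial : ℝ))⁻¹ • A ^ n) W‖ := by
      rw [ContinuousLinearMap.smul_apply, norm_smul, Real.norm_eq_abs,
        abs_of_nonneg (by positivity)]
    rw [this]
    exact ContinuousLinearMap.le_opNorm _ _
  have hF_sum : Summable fun n => ∫ s in Set.Ioc (0:ℝ) 1, ‖F n s‖ := by
    refine Summable.of_nonneg_of_le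
      (fun n => integral_nonneg fun s => norm_nonneg _) (fun n => ?_) hmaj
    have hb : ∀ s ∈ Set.Ioc (0:ℝ) 1, ‖F n s‖ ≤ ((n.factorial : ℝ))⁻¹ * ‖(A ^ n) W‖ := by
      intro s hs
      have hs0 : (0:ℝ) ≤ s := hs.1.le
      rw [hF, norm_smul, Real.norm_eq_abs,
        abs_of_nonneg (mul_nonneg (pow_nonneg hs0 n) (by positivity))]
      have hs1 : s ^ n ≤ 1 := pow_le_one₀ hs0 hs.2
      have : s ^ n * ((n.factorial : ℝ))⁻¹ ≤ ((n.factorial : ℝ))⁻¹ := by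
        nlinarith [inv_nonneg.mpr (Nat.cast_nonneg (n.factorial) : (0:ℝ) ≤ n.factorial)]
      exact mul_le_mul_of_nonneg_right this (norm_nonneg _)
    calc ∫ s in Set.Ioc (0:ℝ) 1, ‖F n s‖
        ≤ ∫ _ in Set.Ioc (0:ℝ) 1, ((n.factorial : ℝ))⁻¹ * ‖(A ^ n) W‖ := by
          refine setIntegral_mono_on ((hFc n).norm.integrableOn_Ioc)
            (integrableOn_const measure_Ioc_lt_top.ne) measurableSet_Ioc hb
      _ = ((n.factorial : ℝ))⁻¹ * ‖(A ^ n) W‖ := by simp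
  have key := integral_tsum_of_summable_integral_norm hF_int hF_sum
  rw [intervalIntegral.integral_of_le zero_le_one]
  have hpt : ∀ s : ℝ, exp (s • A) W = ∑' n, F n s := fun s =>
    exp_smul_apply_eq_tsum A W s
  rw [show (fun s => exp (s • A) W) = fun s => ∑' n, F n s from funext hpt] at *
  rw [← key]
  refine tsum_congr fun n => ?_
  rw [hF]
  rw [integral_smul_const]
  have : ∫ s in Set.Ioc (0:ℝ) 1, s ^ n * ((n.factorial : ℝ))⁻¹
      = (((n+1).factorial : ℝ))⁻¹ := by
    rw [← intervalIntegral.integral_of_le zero_le_one, intervalIntegral.integral_mul_const,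
      integral_pow]
    rw [Nat.factorial_succ]
    push_cast
    rw [one_pow, zero_pow (Nat.succ_ne_zero n)]
    field_simp
    norm_num
  rw [this]

end aux

/-- ∂(e^V) = (ψ̃({V})(∂V))·e^V with ψ̃(X) = Σ Xⁿ/(n+1)! and {V} = ad_V. -/
theorem stmt_11 (L : Type*) [NormedRing L] [NormedAlgebra ℝ L] [CompleteSpace L]
    (D : L →L[ℝ] L) (leibniz : ∀ a b : L, D (a * b) = D a * b + a * D b)
    (V : L)
    (adV : L →L[ℝ] L)
    (hadV : adV = ContinuousLinearMap.mul ℝ L V - (ContinuousLinearMap.mul ℝ L).flip V)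
    (ψ : L →L[ℝ] L)
    (hψ : ψ = ∑' n : ℕ, (((n + 1).factorial : ℝ)⁻¹) • adV ^ n) :
    D (exp V) = ψ (D V) * exp V := by
  set W := D V with hW
  have hD1 : D (1 : L) = 0 := by
    have h := leibniz 1 1
    simpa using h
  -- conjugation formula
  have hconj : ∀ s : ℝ, exp (s • adV) W = exp (s • V) * W * exp (-(s • V)) := by
    intro s
    have hsm : s • adV = ContinuousLinearMap.mul ℝ L (s • V)
        - (ContinuousLinearMap.mul ℝ L).flip (s • V) := by
      rw [hadV, smul_sub, _root_.map_smul, _root_.map_smul]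
    rw [hsm, exp_ad_apply]
  -- ψ applied to W
  have hψsummable : Summable (fun n : ℕ => (((n+1).factorial : ℝ))⁻¹ • adV ^ n) := by
    refine Summable.of_norm_bounded (norm_expSeries_summable' (𝕂 := ℝ) adV) (fun n => ?_)
    rw [norm_smul ((((n+1).factorial : ℝ))⁻¹) (adV ^ n),
      norm_smul (((n.factorial : ℝ))⁻¹) (adV ^ n)]
    have h1 : (0:ℝ) < n.factorial := by exact_mod_cast n.factorial_pos
    have h2 : (n.factorial : ℝ) ≤ ((n+1).factorial : ℝ) := by
      exact_mod_cast Nat.factorial_le (Nat.le_succ n)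
    have h3 : (((n+1).factorial : ℝ))⁻¹ ≤ ((n.factorial : ℝ))⁻¹ := by
      exact inv_anti₀ h1 h2
    refine mul_le_mul_of_nonneg_right ?_ (norm_nonneg _)
    rw [Real.norm_eq_abs, Real.norm_eq_abs, abs_of_nonneg (by positivity),
      abs_of_nonneg (by positivity)]
    exact h3
  have hψDV : ψ W = ∑' n : ℕ, (((n+1).factorial : ℝ))⁻¹ • (adV ^ n) W := by
    have : ψ W = (ContinuousLinearMap.apply ℝ L W) ψ := rfl
    rw [this, hψ, (ContinuousLinearMap.apply ℝ L W).map_tsum hψsummable]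
    exact tsum_congr fun n => by simp
  -- Duhamel formula
  have hint : D (exp V) = ∫ s in (0:ℝ)..1, exp (s • V) * W * exp ((1 - s) • V) := by
    set f : ℝ → L := fun s => exp (s • V) * D (exp ((1 - s) • V)) with hf
    set g : ℝ → L := fun s => exp (s • V) * W * exp ((1 - s) • V) with hg
    have hderiv : ∀ s ∈ Set.uIcc (0:ℝ) 1, HasDerivAt f (-(g s)) s := by
      intro s _
      have h1 : HasDerivAt (fun t : ℝ => exp (t • V)) (exp (s • V) * V) s :=
        hasDerivAt_exp_smul_const V s
      have hin : HasDerivAt (fun t : ℝ => (1 - t)) (-1 : ℝ) s := by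
        simpa using (hasDerivAt_id s).const_sub (1:ℝ)
      have h2 : HasDerivAt (fun t : ℝ => exp ((1 - t) • V))
          ((-1 : ℝ) • (V * exp ((1 - s) • V))) s := by
        have := (hasDerivAt_exp_smul_const' V (1 - s)).scomp s hin
        simpa [Function.comp_def] using this
      have h3 : HasDerivAt (fun t : ℝ => D (exp ((1 - t) • V)))
          (D ((-1 : ℝ) • (V * exp ((1 - s) • V)))) s :=
        D.hasFDerivAt.comp_hasDerivAt s h2
      have h4 := h1.mul h3
      have hDval : D ((-1 : ℝ) • (V * exp ((1 - s) • V)))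
          = -(W * exp ((1 - s) • V) + V * D (exp ((1 - s) • V))) := by
        rw [neg_one_smul, map_neg, leibniz, hW]
      rw [hDval] at h4
      convert h4 using 1
      · rfl
      rw [hg]
      noncomm_ring
    have hgcont : Continuous g := by
      rw [hg]
      exact ((exp_continuous.comp (continuous_id.smul continuous_const)).mul
        continuous_const).mul
        (exp_continuous.comp ((continuous_const.sub continuous_id).smul continuous_const))
    have hfeq := intervalIntegral.integral_eq_sub_of_hasDerivAt hderiv
      (hgcont.neg.intervalIntegrable 0 1)
    have hf1 : f 1 = 0 := by
      rw [hf]; simp [hD1]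
    have hf0 : f 0 = D (exp V) := by
      rw [hf]; simp
    rw [hf1, hf0, intervalIntegral.integral_neg, zero_sub] at hfeq
    exact (neg_injective hfeq).symm
  have step : ∀ s : ℝ, exp (s • V) * W * exp ((1 - s) • V)
      = exp (s • adV) W * exp V := by
    intro s
    have hcm : Commute (-(s • V)) V := ((Commute.refl V).smul_left s).neg_left
    have hsplit : exp ((1 - s) • V) = exp (-(s • V)) * exp V := by
      rw [← exp_add_of_commute hcm]
      congr 1
      rw [sub_smul, one_smul, neg_add_eq_sub]
    rw [hconj s, hsplit]
    noncomm_ring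
  rw [hint, intervalIntegral.integral_congr (fun s _ => step s)]
  have hgc : Continuous fun s : ℝ => exp (s • adV) W :=
    (ContinuousLinearMap.apply ℝ L W).continuous.comp
      (exp_continuous.comp (continuous_id.smul continuous_const))
  have hpull := ((ContinuousLinearMap.mul ℝ L).flip (exp V)).intervalIntegral_comp_comm
    (hgc.intervalIntegrable (μ := MeasureTheory.volume) 0 1)
  have hfin : (∫ x in (0:ℝ)..1, exp (x • adV) W * exp V)
      = (∫ x in (0:ℝ)..1, exp (x • adV) W) * exp V := by
    simpa [ContinuousLinearMap.flip_apply, ContinuousLinearMap.mul_apply'] using hpull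
  rw [hfin, integral_exp_smul_apply adV W, ← hψDV]
end
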